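/- Let C be a compact, strictly convex subset of ℝ² with nonempty interior, and let P be a point not in C. For θ ∈ ℝ let L(θ) = {P + t·(cos θ, sin θ) : t ∈ ℝ}. Then the infimum, over all θ such that L(θ) meets the interior of C, of the chord length μH¹(C ∩ L(θ)) equals 0: for every ε > 0 there exists θ with L(θ) ∩ interior(C) ≠ ∅ and μH¹(C ∩ L(θ)) < ε. Consequently, for a convex region whose boundary contains no straight segments, the large-n limit of the fairness function is infinite at every exterior point. -/

import Mathlib

open MeasureTheory Filter
open scoped ENNReal NNReal RealInnerProductSpace Topology

noncomputable def vv (θ : ℝ) : EuclideanSpace ℝ (Fin 2) :=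
  (EuclideanSpace.equiv (Fin 2) ℝ).symm ![Real.cos θ, Real.sin θ]

theorem vv_norm (θ : ℝ) : ‖vv θ‖ = 1 := by
  rw [EuclideanSpace.norm_eq]; simp [vv, Fin.sum_univ_two]

theorem vv_cont : Continuous vv := by
  refine Continuous.comp (EuclideanSpace.equiv (Fin 2) ℝ).symm.continuous ?_
  refine continuous_pi fun i => ?_
  fin_cases i <;> simp <;> fun_prop

theorem vv_inner (t θ : ℝ) : ⟪t • vv θ, vv θ⟫ = t := by
  rw [real_inner_smul_left, real_inner_self_eq_norm_sq, vv_norm]; ring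

theorem vv_neg (θ : ℝ) : vv (θ + Real.pi) = -vv θ := by
  have : ∀ i : Fin 2, vv (θ + Real.pi) i = (-vv θ) i := by
    intro i
    fin_cases i <;>
      simp [vv, EuclideanSpace.equiv, Real.cos_add_pi, Real.sin_add_pi]
  ext i; exact this i

theorem line_lipschitz (P : EuclideanSpace ℝ (Fin 2)) (θ : ℝ) :
    LipschitzWith 1 (fun t : ℝ => P + t • vv θ) := by
  refine LipschitzWith.of_dist_le_mul fun s t => ?_
  simp only [dist_eq_norm, NNReal.coe_one, one_mul]
  have : P + s • vv θ - (P + t • vv θ) = (s - t) • vv θ := by module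
  rw [this, norm_smul, vv_norm, mul_one, Real.norm_eq_abs]

theorem chord_bound (C : Set (EuclideanSpace ℝ (Fin 2))) (P : EuclideanSpace ℝ (Fin 2))
    (θ : ℝ) (a b : ℝ) (hT : {t : ℝ | P + t • vv θ ∈ C} ⊆ Set.Icc a b) :
    μH[1] (C ∩ {x | ∃ t : ℝ, x = P + t • vv θ}) ≤ ENNReal.ofReal (b - a) := by
  have himg : C ∩ {x | ∃ t : ℝ, x = P + t • vv θ}
      = (fun t : ℝ => P + t • vv θ) '' {t : ℝ | P + t • vv θ ∈ C} := by
    ext x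
    constructor
    · rintro ⟨hxC, t, rfl⟩; exact ⟨t, hxC, rfl⟩
    · rintro ⟨t, htC, rfl⟩; exact ⟨htC, t, rfl⟩
  rw [himg]
  calc μH[1] ((fun t : ℝ => P + t • vv θ) '' {t : ℝ | P + t • vv θ ∈ C})
      ≤ (1:ℝ≥0) ^ (1:ℝ) * μH[1] {t : ℝ | P + t • vv θ ∈ C} :=
        (line_lipschitz P θ).hausdorffMeasure_image_le zero_le_one _
    _ = volume {t : ℝ | P + t • vv θ ∈ C} := by
        rw [MeasureTheory.hausdorffMeasure_real]; simp
    _ ≤ volume (Set.Icc a b) := measure_mono hT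
    _ = ENNReal.ofReal (b - a) := Real.volume_Icc

theorem strictConvex_exterior_chord_length_inf_zero
    (C : Set (EuclideanSpace ℝ (Fin 2))) (hCcompact : IsCompact C)
    (hCconv : StrictConvex ℝ C) (hCint : (interior C).Nonempty)
    (P : EuclideanSpace ℝ (Fin 2)) (hP : P ∉ C)
    (L : ℝ → Set (EuclideanSpace ℝ (Fin 2)))
    (hL : ∀ θ, L θ = {x | ∃ t : ℝ,
      x = P + t • ((EuclideanSpace.equiv (Fin 2) ℝ).symm ![Real.cos θ, Real.sin θ])}) :
    ∀ ε : ℝ, 0 < ε → ∃ θ : ℝ, (L θ ∩ interior C).Nonempty ∧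
      μH[1] (C ∩ L θ) < ENNReal.ofReal ε := by
  intro ε hε
  have hLvv : ∀ θ, L θ = {x | ∃ t : ℝ, x = P + t • vv θ} := hL
  have hCclosed : IsClosed C := hCcompact.isClosed
  by_contra hcon
  push_neg at hcon
  -- the set of angles whose line meets the interior
  set A : Set ℝ := {θ | ∃ t : ℝ, P + t • vv θ ∈ interior C} with hA
  have hmem : ∀ θ, θ ∈ A → (L θ ∩ interior C).Nonempty := by
    rintro θ ⟨t, ht⟩
    exact ⟨P + t • vv θ, by rw [hLvv θ]; exact ⟨t, rfl⟩, ht⟩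
  -- A is open
  have hAopen : IsOpen A := by
    have hU : IsOpen ((fun p : ℝ × ℝ => P + p.2 • vv p.1) ⁻¹' interior C) :=
      (isOpen_interior).preimage
        (continuous_const.add (continuous_snd.smul (vv_cont.comp continuous_fst)))
    have : A = Prod.fst '' ((fun p : ℝ × ℝ => P + p.2 • vv p.1) ⁻¹' interior C) := by
      ext θ
      constructor
      · rintro ⟨t, ht⟩; exact ⟨(θ, t), ht, rfl⟩
      · rintro ⟨⟨θ', t⟩, ht, rfl⟩; exact ⟨t, ht⟩
    rw [this]
    exact isOpenMap_fst _ hU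
  -- A is nonempty
  have hAne : A.Nonempty := by
    obtain ⟨x₀, hx₀⟩ := hCint
    have hx₀P : x₀ ≠ P := fun h => hP (h ▸ interior_subset hx₀)
    set z : ℂ := ⟨x₀ 0 - P 0, x₀ 1 - P 1⟩ with hz
    have hzne : z ≠ 0 := by
      intro h
      apply hx₀P
      have h0 : x₀ 0 - P 0 = 0 := congrArg Complex.re h
      have h1 : x₀ 1 - P 1 = 0 := congrArg Complex.im h
      ext i
      fin_cases i
      · show x₀ (0:Fin 2) = P (0:Fin 2); linarith
      · show x₀ (1:Fin 2) = P (1:Fin 2); linarith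
    refine ⟨z.arg, ⟨‖z‖, ?_⟩⟩
    have habs : (‖z‖ : ℝ) ≠ 0 := norm_ne_zero_iff.mpr hzne
    have hcos : Real.cos z.arg = z.re / ‖z‖ := Complex.cos_arg hzne
    have hsin : Real.sin z.arg = z.im / ‖z‖ := Complex.sin_arg z
    have : P + (‖z‖ : ℝ) • vv z.arg = x₀ := by
      ext i
      fin_cases i
      · show P 0 + (‖z‖ : ℝ) * Real.cos z.arg = x₀ 0
        rw [hcos]; field_simp [hz]; show P 0 + (x₀ 0 - P 0) = x₀ 0; ring
      · show P 1 + (‖z‖ : ℝ) * Real.sin z.arg = x₀ 1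
        rw [hsin]; field_simp [hz]; show P 1 + (x₀ 1 - P 1) = x₀ 1; ring
    rw [this]; exact hx₀
  -- A is not all of ℝ
  have hAne_univ : A ≠ Set.univ := by
    obtain ⟨f, u, hfP, hfC⟩ :=
      geometric_hahn_banach_point_closed hCconv.convex hCclosed hP
    set g : ℝ → ℝ := fun θ => f (vv θ) with hg
    have hgc : Continuous g := f.continuous.comp vv_cont
    have hgneg : ∀ θ, g (θ + Real.pi) = -g θ := by
      intro θ; simp [hg, vv_neg, map_neg]
    have : ∃ θ, g θ = 0 := by
      rcases le_total (g 0) 0 with h | h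
      · have h2 : (0:ℝ) ∈ Set.Icc (g 0) (g Real.pi) := by
          constructor
          · exact h
          · have := hgneg 0; simp at this; rw [this]; linarith
        obtain ⟨θ, _, hθ⟩ := intermediate_value_Icc Real.pi_pos.le hgc.continuousOn h2
        exact ⟨θ, hθ⟩
      · have h2 : (0:ℝ) ∈ Set.Icc (g Real.pi) (g 0) := by
          constructor
          · have := hgneg 0; simp at this; rw [this]; linarith
          · exact h
        obtain ⟨θ, _, hθ⟩ := intermediate_value_Icc' Real.pi_pos.le hgc.continuousOn h2
        exact ⟨θ, hθ⟩
    obtain ⟨θz, hθz⟩ := this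
    intro hAu
    have : θz ∈ A := hAu ▸ Set.mem_univ θz
    obtain ⟨t, ht⟩ := this
    have h1 : u < f (P + t • vv θz) := hfC _ (interior_subset ht)
    have h2 : f (P + t • vv θz) = f P + t * g θz := by
      simp [hg, map_add, _root_.map_smul, smul_eq_mul]
    rw [h2, hθz] at h1
    linarith
  -- a boundary angle θ₀
  have : ∃ θ₀ ∈ closure A, θ₀ ∉ A := by
    by_contra h
    push_neg at h
    have hclosed : IsClosed A := by
      rw [← closure_eq_iff_isClosed]
      exact subset_antisymm h subset_closure
    rcases isClopen_iff.mp ⟨hclosed, hAopen⟩ with h' | h'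
    · exact hAne.ne_empty h'
    · exact hAne_univ h'
  obtain ⟨θ₀, hθ₀cl, hθ₀A⟩ := this
  obtain ⟨θs, hθsA, hθs⟩ := mem_closure_iff_seq_limit.mp hθ₀cl
  -- radius bound
  obtain ⟨R, hR⟩ := hCcompact.isBounded.subset_closedBall P
  -- the chord parameter sets
  set T : ℕ → Set ℝ := fun n => {t : ℝ | P + t • vv (θs n) ∈ C} with hT
  have hTne : ∀ n, (T n).Nonempty := by
    intro n
    obtain ⟨t, ht⟩ := hθsA n
    exact ⟨t, show P + t • vv (θs n) ∈ C from interior_subset ht⟩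
  have hTsub : ∀ n, T n ⊆ Set.Icc (-R) R := by
    intro n t ht
    have : dist (P + t • vv (θs n)) P ≤ R := hR ht
    rw [dist_eq_norm, add_sub_cancel_left, norm_smul, vv_norm, mul_one,
      Real.norm_eq_abs] at this
    exact abs_le.mp this
  have hTclosed : ∀ n, IsClosed (T n) :=
    fun n => hCclosed.preimage (continuous_const.add (continuous_id.smul continuous_const))
  have hTbddB : ∀ n, BddBelow (T n) := fun n => ⟨-R, fun t ht => (hTsub n ht).1⟩
  have hTbddA : ∀ n, BddAbove (T n) := fun n => ⟨R, fun t ht => (hTsub n ht).2⟩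
  set a : ℕ → ℝ := fun n => sInf (T n) with ha
  set b : ℕ → ℝ := fun n => sSup (T n) with hb
  have haT : ∀ n, a n ∈ T n := fun n => (hTclosed n).csInf_mem (hTne n) (hTbddB n)
  have hbT : ∀ n, b n ∈ T n := fun n => (hTclosed n).csSup_mem (hTne n) (hTbddA n)
  have hab : ∀ n, a n ≤ b n := fun n => csInf_le_csSup (hTne n) (hTbddB n) (hTbddA n)
  -- the chords are long
  have hlong : ∀ n, ε ≤ b n - a n := by
    intro n
    have h1 : ENNReal.ofReal ε ≤ μH[1] (C ∩ L (θs n)) := hcon (θs n) (hmem _ (hθsA n))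
    have h2 : μH[1] (C ∩ L (θs n)) ≤ ENNReal.ofReal (b n - a n) := by
      rw [hLvv]
      refine chord_bound C P (θs n) (a n) (b n) fun t ht => ?_
      exact ⟨csInf_le (hTbddB n) ht, le_csSup (hTbddA n) ht⟩
    have := h1.trans h2
    exact (ENNReal.ofReal_le_ofReal_iff (by linarith [hab n])).mp this
  -- extract convergent subsequences of the endpoints
  set x : ℕ → EuclideanSpace ℝ (Fin 2) := fun n => P + a n • vv (θs n) with hx
  set y : ℕ → EuclideanSpace ℝ (Fin 2) := fun n => P + b n • vv (θs n) with hy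
  obtain ⟨xl, hxlC, φ, hφ, hxconv⟩ := hCcompact.tendsto_subseq (x := x) (fun n => haT n)
  obtain ⟨yl, hylC, ψ, hψ, hyconv⟩ :=
    hCcompact.tendsto_subseq (x := fun n => y (φ n)) (fun n => hbT (φ n))
  set σ : ℕ → ℕ := φ ∘ ψ with hσ
  have hσmono : StrictMono σ := hφ.comp hψ
  have hθσ : Tendsto (fun n => θs (σ n)) atTop (𝓝 θ₀) :=
    hθs.comp (hσmono.tendsto_atTop)
  have hxσ : Tendsto (fun n => x (σ n)) atTop (𝓝 xl) :=
    hxconv.comp (hψ.tendsto_atTop)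
  have hyσ : Tendsto (fun n => y (σ n)) atTop (𝓝 yl) := hyconv
  -- limits of the parameters
  have hvθσ : Tendsto (fun n => vv (θs (σ n))) atTop (𝓝 (vv θ₀)) :=
    (vv_cont.tendsto θ₀).comp hθσ
  set al : ℝ := ⟪xl - P, vv θ₀⟫ with hal
  set bl : ℝ := ⟪yl - P, vv θ₀⟫ with hbl
  have haσ : Tendsto (fun n => a (σ n)) atTop (𝓝 al) := by
    refine (Tendsto.inner (hxσ.sub tendsto_const_nhds) hvθσ).congr fun n => ?_
    rw [hx]; simp only [add_sub_cancel_left]; rw [vv_inner]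
  have hbσ : Tendsto (fun n => b (σ n)) atTop (𝓝 bl) := by
    refine (Tendsto.inner (hyσ.sub tendsto_const_nhds) hvθσ).congr fun n => ?_
    rw [hy]; simp only [add_sub_cancel_left]; rw [vv_inner]
  have hxl : xl = P + al • vv θ₀ := by
    refine tendsto_nhds_unique hxσ ((tendsto_const_nhds.add (haσ.smul hvθσ)).congr fun n => ?_)
    rw [hx]
  have hyl : yl = P + bl • vv θ₀ := by
    refine tendsto_nhds_unique hyσ ((tendsto_const_nhds.add (hbσ.smul hvθσ)).congr fun n => ?_)
    rw [hy]
  have hεab : ε ≤ bl - al :=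
    ge_of_tendsto' (hbσ.sub haσ) fun n => hlong (σ n)
  have hxyne : xl ≠ yl := by
    intro h
    have : al = bl := by
      have := congrArg (fun w => ⟪w - P, vv θ₀⟫) h
      simp only [hxl, hyl, add_sub_cancel_left, vv_inner] at this
      exact this
    linarith
  have hmid := hCconv hxlC hylC hxyne (a := (1:ℝ)/2) (b := (1:ℝ)/2)
    (by norm_num) (by norm_num) (by norm_num)
  refine hθ₀A ⟨(al + bl)/2, ?_⟩
  have hm : ((1:ℝ)/2) • xl + ((1:ℝ)/2) • yl = P + ((al + bl)/2) • vv θ₀ := by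
    rw [hxl, hyl]; module
  rw [← hm]
  exact hmid
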